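/- Let T > 0, μ ∈ (0,1) and C₁ > 0. Let v : [0,T] → ℝ be continuously differentiable on [0,T] and twice continuously differentiable on (0,T] with |v″(t)| ≤ C₁ t^{−μ} for all t ∈ (0,T]. Then there exists C₂ > 0, depending only on C₁ and μ, such that for every positive integer N (τ = T/N, t_k = kτ), every n with 1 ≤ n ≤ N, and every t ∈ [t_{n−1}, t_n], |v(t) − Πv(t)| ≤ C₂ τ ( t_n^{1−μ} − t_{n−1}^{1−μ} ). -/

import Mathlib

lemma aux_ftc1 (T : ℝ) (v v' : ℝ → ℝ)
    (hv : ∀ t ∈ Set.Icc (0:ℝ) T, HasDerivWithinAt v (v' t) (Set.Icc 0 T) t)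
    (hv' : ContinuousOn v' (Set.Icc (0:ℝ) T))
    {p q : ℝ} (hp : 0 ≤ p) (hpq : p ≤ q) (hq : q ≤ T) :
    ∫ s in p..q, v' s = v q - v p := by
  have hsub : Set.Icc p q ⊆ Set.Icc (0:ℝ) T := Set.Icc_subset_Icc hp hq
  apply intervalIntegral.integral_eq_sub_of_hasDeriv_right_of_le hpq
  · exact fun x hx => ((hv x (hsub hx)).continuousWithinAt).mono hsub
  · intro x hx
    refine (hv x (hsub ⟨le_of_lt hx.1, le_of_lt hx.2⟩)).mono_of_mem_nhdsWithin ?_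
    refine Filter.mem_of_superset (Ioc_mem_nhdsGT_of_mem ⟨le_refl x, lt_of_lt_of_le hx.2 hq⟩) ?_
    exact fun y hy => ⟨le_trans (le_trans hp (le_of_lt hx.1)) (le_of_lt hy.1), hy.2⟩
  · exact (hv'.mono hsub).intervalIntegrable_of_Icc hpq

lemma aux_ftc2 (T : ℝ) (v' v'' : ℝ → ℝ)
    (hv' : ContinuousOn v' (Set.Icc (0:ℝ) T))
    (hv'' : ∀ t ∈ Set.Ioc (0:ℝ) T, HasDerivWithinAt v' (v'' t) (Set.Ioc 0 T) t)
    (hv''c : ContinuousOn v'' (Set.Ioc (0:ℝ) T))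
    {p q : ℝ} (hp : 0 < p) (hpq : p ≤ q) (hq : q ≤ T) :
    ∫ s in p..q, v'' s = v' q - v' p := by
  have hsub : Set.Icc p q ⊆ Set.Ioc (0:ℝ) T := fun x hx => ⟨lt_of_lt_of_le hp hx.1, le_trans hx.2 hq⟩
  have hsub' : Set.Icc p q ⊆ Set.Icc (0:ℝ) T := fun x hx => ⟨le_trans hp.le hx.1, le_trans hx.2 hq⟩
  apply intervalIntegral.integral_eq_sub_of_hasDeriv_right_of_le hpq
  · exact hv'.mono hsub'
  · intro x hx
    refine (hv'' x (hsub ⟨le_of_lt hx.1, le_of_lt hx.2⟩)).mono_of_mem_nhdsWithin ?_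
    refine Filter.mem_of_superset (Ioc_mem_nhdsGT_of_mem ⟨le_refl x, lt_of_lt_of_le hx.2 hq⟩) ?_
    exact fun y hy => ⟨lt_trans (lt_of_lt_of_le hp (le_of_lt hx.1)) hy.1, hy.2⟩
  · exact (hv''c.mono hsub).intervalIntegrable_of_Icc hpq

theorem stmt11 (μ C₁ : ℝ) (hμ : μ ∈ Set.Ioo (0 : ℝ) 1) (hC₁ : 0 < C₁) :
    ∃ C₂ > 0, ∀ T : ℝ, 0 < T → ∀ v v' v'' : ℝ → ℝ,
      (∀ t ∈ Set.Icc (0 : ℝ) T, HasDerivWithinAt v (v' t) (Set.Icc 0 T) t) →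
      ContinuousOn v' (Set.Icc (0 : ℝ) T) →
      (∀ t ∈ Set.Ioc (0 : ℝ) T, HasDerivWithinAt v' (v'' t) (Set.Ioc 0 T) t) →
      ContinuousOn v'' (Set.Ioc (0 : ℝ) T) →
      (∀ t ∈ Set.Ioc (0 : ℝ) T, |v'' t| ≤ C₁ * t ^ (-μ)) →
      ∀ N : ℕ, 0 < N → ∀ n : ℕ, 1 ≤ n → n ≤ N →
        ∀ t ∈ Set.Icc (((n : ℝ) - 1) * (T / N)) ((n : ℝ) * (T / N)),
          |v t - (v (((n : ℝ) - 1) * (T / N))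
              + (t - ((n : ℝ) - 1) * (T / N)) *
                  (v ((n : ℝ) * (T / N)) - v (((n : ℝ) - 1) * (T / N))) / (T / N))|
            ≤ C₂ * (T / N) *
                (((n : ℝ) * (T / N)) ^ (1 - μ) - (((n : ℝ) - 1) * (T / N)) ^ (1 - μ)) := by
  obtain ⟨hμ0, hμ1⟩ := hμ
  have h1μ : (0:ℝ) < 1 - μ := by linarith
  refine ⟨2 * C₁ / (1 - μ), by positivity, ?_⟩
  intro T hT v v' v'' hv hv'c hv' hv''c hbd N hN n hn1 hnN t ht
  set τ : ℝ := T / N with hτdef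
  have hτ : 0 < τ := by positivity
  set a : ℝ := ((n:ℝ) - 1) * τ with hadef
  set b : ℝ := (n:ℝ) * τ with hbdef
  have hn1' : (1:ℝ) ≤ (n:ℝ) := by exact_mod_cast hn1
  have ha0 : 0 ≤ a := mul_nonneg (by linarith) hτ.le
  have hba : b - a = τ := by ring
  have hab : a ≤ b := by nlinarith
  have hbT : b ≤ T := by
    have hnN' : (n:ℝ) ≤ (N:ℝ) := by exact_mod_cast hnN
    have : (N:ℝ) * τ = T := by
      rw [hτdef]; field_simp
    nlinarith
  obtain ⟨hta, htb⟩ := ht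
  set M : ℝ := C₁ / (1 - μ) * (b ^ (1 - μ) - a ^ (1 - μ)) with hMdef
  have hM0 : 0 ≤ M := by
    have : a ^ (1 - μ) ≤ b ^ (1 - μ) := Real.rpow_le_rpow ha0 hab h1μ.le
    have : 0 ≤ b ^ (1 - μ) - a ^ (1 - μ) := by linarith
    positivity
  -- key bound on |v' s - v' b| for s ∈ Ioc a b
  have key : ∀ s ∈ Set.Ioc a b, |v' s - v' b| ≤ M := by
    intro s hs
    have hs0 : 0 < s := lt_of_le_of_lt ha0 hs.1
    have hsb : s ≤ b := hs.2
    have hftc : ∫ r in s..b, v'' r = v' b - v' s := aux_ftc2 T v' v'' hv'c hv' hv''c hs0 hsb hbT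
    have hIccsub : Set.Icc s b ⊆ Set.Ioc (0:ℝ) T :=
      fun x hx => ⟨lt_of_lt_of_le hs0 hx.1, le_trans hx.2 hbT⟩
    have hint1 : IntervalIntegrable (fun r => |v'' r|) MeasureTheory.volume s b := by
      refine ContinuousOn.intervalIntegrable_of_Icc hsb ?_
      exact ((hv''c.mono hIccsub)).abs
    have hint2 : IntervalIntegrable (fun r => C₁ * r ^ (-μ)) MeasureTheory.volume s b := by
      refine ContinuousOn.intervalIntegrable_of_Icc hsb ?_
      refine continuousOn_const.mul ?_
      refine ContinuousOn.rpow_const continuousOn_id ?_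
      exact fun x hx => Or.inl (ne_of_gt (lt_of_lt_of_le hs0 hx.1))
    have h1 : |v' b - v' s| ≤ ∫ r in s..b, |v'' r| := by
      rw [← hftc]
      exact intervalIntegral.abs_integral_le_integral_abs hsb
    have h2 : (∫ r in s..b, |v'' r|) ≤ ∫ r in s..b, C₁ * r ^ (-μ) := by
      refine intervalIntegral.integral_mono_on hsb hint1 hint2 ?_
      exact fun x hx => hbd x (hIccsub hx)
    have h3 : (∫ r in s..b, C₁ * r ^ (-μ)) = C₁ * ((b ^ (1 - μ) - s ^ (1 - μ)) / (1 - μ)) := by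
      rw [intervalIntegral.integral_const_mul, integral_rpow (Or.inl (by linarith)),
        show -μ + 1 = 1 - μ from by ring]
    have h4 : s ^ (1 - μ) ≥ a ^ (1 - μ) := Real.rpow_le_rpow ha0 (le_of_lt hs.1) h1μ.le
    have := le_trans h1 h2
    rw [h3] at this
    rw [abs_sub_comm]
    calc |v' b - v' s| ≤ C₁ * ((b ^ (1 - μ) - s ^ (1 - μ)) / (1 - μ)) := this
      _ ≤ M := by
        rw [hMdef, div_mul_eq_mul_div, mul_div_assoc]
        have h5 : b ^ (1 - μ) - s ^ (1 - μ) ≤ b ^ (1 - μ) - a ^ (1 - μ) := by linarith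
        gcongr
  -- FTC for v
  have htT : t ≤ T := le_trans htb hbT
  have hA : ∫ s in a..t, v' s = v t - v a := aux_ftc1 T v v' hv hv'c ha0 hta htT
  have hB : ∫ s in a..b, v' s = v b - v a := aux_ftc1 T v v' hv hv'c ha0 hab hbT
  set c : ℝ := v' b with hcdef
  have hintv't : IntervalIntegrable v' MeasureTheory.volume a t :=
    (hv'c.mono (Set.Icc_subset_Icc ha0 htT)).intervalIntegrable_of_Icc hta
  have hintv'b : IntervalIntegrable v' MeasureTheory.volume a b :=
    (hv'c.mono (Set.Icc_subset_Icc ha0 hbT)).intervalIntegrable_of_Icc hab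
  have hA' : ∫ s in a..t, (v' s - c) = (v t - v a) - (t - a) * c := by
    rw [intervalIntegral.integral_sub hintv't intervalIntegrable_const,
      intervalIntegral.integral_const, hA, smul_eq_mul]
  have hB' : ∫ s in a..b, (v' s - c) = (v b - v a) - τ * c := by
    rw [intervalIntegral.integral_sub hintv'b intervalIntegrable_const,
      intervalIntegral.integral_const, hB, smul_eq_mul, hba]
  have hAbd : |∫ s in a..t, (v' s - c)| ≤ M * (t - a) := by
    have := intervalIntegral.norm_integral_le_of_norm_le_const
      (C := M) (f := fun s => v' s - c) (a := a) (b := t) ?_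
    · simpa [abs_of_nonneg (by linarith : (0:ℝ) ≤ t - a)] using this
    · intro x hx
      rw [Set.uIoc_of_le hta] at hx
      exact key x ⟨hx.1, le_trans hx.2 htb⟩
  have hBbd : |∫ s in a..b, (v' s - c)| ≤ M * τ := by
    have := intervalIntegral.norm_integral_le_of_norm_le_const
      (C := M) (f := fun s => v' s - c) (a := a) (b := b) ?_
    · have h := this
      rw [show |b - a| = τ by rw [hba]; exact abs_of_pos hτ] at h
      simpa using h
    · intro x hx
      rw [Set.uIoc_of_le hab] at hx
      exact key x hx
  -- put everything together
  set A : ℝ := ∫ s in a..t, (v' s - c) with hAdef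
  set B : ℝ := ∫ s in a..b, (v' s - c) with hBdef
  have hvt : v t = v a + (t - a) * c + A := by rw [hA']; ring
  have hvb : v b - v a = τ * c + B := by linarith [hB']
  have herr : v t - (v a + (t - a) * (v b - v a) / τ) = A - (t - a) / τ * B := by
    rw [hvt, hvb]
    field_simp
    ring
  rw [herr]
  have hta' : 0 ≤ t - a := by linarith
  have htaτ : t - a ≤ τ := by
    have : t ≤ b := htb
    linarith [hba]
  have hfrac : (t - a) / τ ≤ 1 := by
    rw [div_le_one hτ]; exact htaτ
  have hfrac0 : 0 ≤ (t - a) / τ := div_nonneg hta' hτ.le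
  calc |A - (t - a) / τ * B| ≤ |A| + |(t - a) / τ * B| := abs_sub _ _
    _ = |A| + (t - a) / τ * |B| := by rw [abs_mul, abs_of_nonneg hfrac0]
    _ ≤ M * (t - a) + 1 * (M * τ) := by
        gcongr
    _ ≤ M * τ + M * τ := by nlinarith
    _ = 2 * C₁ / (1 - μ) * τ * (b ^ (1 - μ) - a ^ (1 - μ)) := by
        rw [hMdef]; ring
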